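/- Let x : Fin h × Fin w × T → {0,1} be a binary assignment. Then x satisfies (i) for every color ℓ, every column j and every pair of consecutive rows i, i+1: ∑_{k∈T, s(k)=ℓ} x(i,j,k) = ∑_{k∈T, n(k)=ℓ} x(i+1,j,k); (ii) for every color ℓ, every row i and every pair of consecutive columns j, j+1: ∑_{k∈T, e(k)=ℓ} x(i,j,k) = ∑_{k∈T, w(k)=ℓ} x(i,j+1,k); (iii) ∑_{k∈T} x(i,j,k) = 1 for every cell (i,j) lying in the first or last row; and (iv) ∑_{k∈T} x(i,j,k) = 1 for every cell (i,j) lying in the first or last column — if and only if there exists a valid complete tiling τ : Fin h × Fin w → T with x(i,j,k) = 1 ⟺ τ(i,j) = k. In particular, constraints (i)–(iv) force ∑_{k∈T} x(i,j,k) = 1 at every interior cell as well. -/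
import Mathlib

private lemma sum_binary_unique {T : Type} [Fintype T] (f : T → ℕ)
    (hb : ∀ k, f k = 0 ∨ f k = 1) (hs : ∑ k, f k = 1) :
    ∃ a, f a = 1 ∧ ∀ b, f b = 1 → b = a := by
  classical
  by_cases hall : ∀ k, f k = 0
  · rw [Finset.sum_eq_zero (fun k _ => hall k)] at hs
    omega
  · push_neg at hall
    obtain ⟨a, ha⟩ := hall
    have ha1 : f a = 1 := (hb a).resolve_left ha
    refine ⟨a, ha1, fun b hb1 => ?_⟩
    by_contra hne
    have h2 : ∑ k ∈ ({a, b} : Finset T), f k ≤ ∑ k, f k :=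
      Finset.sum_le_sum_of_subset (Finset.subset_univ _)
    rw [Finset.sum_pair (Ne.symm hne), ha1, hb1, hs] at h2
    omega

private lemma sum_regroup {C T : Type} [Fintype T] [DecidableEq C]
    (f : T → C) (g : T → ℕ) (S : Finset C) (hS : ∀ k, f k ∈ S) :
    ∑ ℓ ∈ S, ∑ k : T, (if f k = ℓ then g k else 0) = ∑ k : T, g k := by
  rw [Finset.sum_comm]
  refine Finset.sum_congr rfl fun k _ => ?_
  rw [Finset.sum_ite_eq S (f k) (fun _ => g k), if_pos (hS k)]

private lemma sum_double_ite {C T : Type} [Fintype T] [DecidableEq C] [DecidableEq T]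
    (f : T → C) (ℓ : C) (a : T) :
    ∑ k : T, (if f k = ℓ then (if a = k then (1:ℕ) else 0) else 0) =
      (if f a = ℓ then 1 else 0) := by
  rw [Finset.sum_eq_single a]
  · simp
  · intro b _ hb
    simp [Ne.symm hb]
  · intro h; exact absurd (Finset.mem_univ a) h

/-- Feasibility for the decision formulation (8): color-balance adjacency constraints
plus the one-tile-per-cell constraints on the first/last rows and columns. -/
def WangFeasible {C T : Type} [Fintype T] [DecidableEq C]
    {h w : ℕ} (tn tw ts te : T → C) (x : Fin h → Fin w → T → ℕ) : Prop :=
  (∀ (i : Fin h) (j : Fin w) (hi : i.val + 1 < h) (ℓ : C),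
      (∑ k : T, if ts k = ℓ then x i j k else 0) =
        ∑ k : T, if tn k = ℓ then x ⟨i.val + 1, hi⟩ j k else 0) ∧
  (∀ (i : Fin h) (j : Fin w) (hj : j.val + 1 < w) (ℓ : C),
      (∑ k : T, if te k = ℓ then x i j k else 0) =
        ∑ k : T, if tw k = ℓ then x i ⟨j.val + 1, hj⟩ k else 0) ∧
  (∀ (i : Fin h) (j : Fin w), (i.val = 0 ∨ i.val = h - 1) → (∑ k : T, x i j k) = 1) ∧
  (∀ (i : Fin h) (j : Fin w), (j.val = 0 ∨ j.val = w - 1) → (∑ k : T, x i j k) = 1)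

private lemma wang_sum_one {C T : Type} [Fintype T] [DecidableEq C]
    {h w : ℕ} (tn tw ts te : T → C)
    (x : Fin h → Fin w → T → ℕ)
    (hf : WangFeasible tn tw ts te x) :
    ∀ (i : Fin h) (j : Fin w), (∑ k : T, x i j k) = 1 := by
  obtain ⟨h1, _h2, h3, _h4⟩ := hf
  set S : Finset C := Finset.univ.image ts ∪ Finset.univ.image tn with hSdef
  have hts : ∀ k : T, ts k ∈ S := fun k =>
    Finset.mem_union_left _ (Finset.mem_image_of_mem ts (Finset.mem_univ k))
  have htn : ∀ k : T, tn k ∈ S := fun k =>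
    Finset.mem_union_right _ (Finset.mem_image_of_mem tn (Finset.mem_univ k))
  have sumEq : ∀ (i : Fin h) (j : Fin w) (hi : i.val + 1 < h),
      (∑ k : T, x i j k) = ∑ k : T, x ⟨i.val + 1, hi⟩ j k := by
    intro i j hi
    calc (∑ k : T, x i j k)
        = ∑ ℓ ∈ S, ∑ k : T, (if ts k = ℓ then x i j k else 0) :=
          (sum_regroup ts (x i j) S hts).symm
      _ = ∑ ℓ ∈ S, ∑ k : T, (if tn k = ℓ then x ⟨i.val + 1, hi⟩ j k else 0) :=
          Finset.sum_congr rfl fun ℓ _ => h1 i j hi ℓ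
      _ = ∑ k : T, x ⟨i.val + 1, hi⟩ j k :=
          sum_regroup tn (x ⟨i.val + 1, hi⟩ j) S htn
  intro i j
  obtain ⟨n, hn⟩ := i
  induction n with
  | zero => exact h3 ⟨0, hn⟩ j (Or.inl rfl)
  | succ m ih =>
      have hm : m < h := by omega
      rw [← sumEq ⟨m, hm⟩ j hn]
      exact ih hm

/-- a binary assignment satisfies the constraints of the decision
program (8) iff it is the indicator of a valid complete tiling; in particular the
constraints force exactly one tile at every cell. -/
theorem stmt_0 {C T : Type} [Fintype T] [DecidableEq C]
    {h w : ℕ} (tn tw ts te : T → C)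
    (x : Fin h → Fin w → T → ℕ)
    (hx : ∀ i j k, x i j k = 0 ∨ x i j k = 1) :
    (WangFeasible tn tw ts te x ↔
      ∃ τ : Fin h → Fin w → T,
        (∀ (i : Fin h) (j : Fin w) (hi : i.val + 1 < h),
          ts (τ i j) = tn (τ ⟨i.val + 1, hi⟩ j)) ∧
        (∀ (i : Fin h) (j : Fin w) (hj : j.val + 1 < w),
          te (τ i j) = tw (τ i ⟨j.val + 1, hj⟩)) ∧
        (∀ i j k, x i j k = 1 ↔ τ i j = k)) ∧
    (WangFeasible tn tw ts te x →
      ∀ (i : Fin h) (j : Fin w), (∑ k : T, x i j k) = 1) := by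
  classical
  refine ⟨⟨fun hf => ?_, fun hτ => ?_⟩, wang_sum_one tn tw ts te x⟩
  · -- forward direction
    have sumOne := wang_sum_one tn tw ts te x hf
    obtain ⟨h1, h2, h3, h4⟩ := hf
    have huniq : ∀ (i : Fin h) (j : Fin w),
        ∃ a, x i j a = 1 ∧ ∀ b, x i j b = 1 → b = a :=
      fun i j => sum_binary_unique (x i j) (hx i j) (sumOne i j)
    choose τ hτ1 hτ2 using huniq
    have hiff : ∀ i j k, x i j k = 1 ↔ τ i j = k := by
      intro i j k
      constructor
      · intro hk; exact (hτ2 i j k hk).symm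
      · intro hk; exact hk ▸ hτ1 i j
    have hadj : ∀ (i i' : Fin h) (j j' : Fin w) (f g : T → C),
        (∑ k : T, if f k = f (τ i j) then x i j k else 0) =
          (∑ k : T, if g k = f (τ i j) then x i' j' k else 0) →
        f (τ i j) = g (τ i' j') := by
      intro i i' j j' f g heq
      set ℓ := f (τ i j) with hℓ
      have hL : (∑ k : T, if f k = ℓ then x i j k else 0) = 1 := by
        have hle : (∑ k : T, if f k = ℓ then x i j k else 0) ≤ ∑ k : T, x i j k := by
          refine Finset.sum_le_sum fun k _ => ?_
          split <;> omega
        have hge : 1 ≤ ∑ k : T, if f k = ℓ then x i j k else 0 :=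
          calc (1:ℕ) = (if f (τ i j) = ℓ then x i j (τ i j) else 0) := by
                rw [if_pos rfl, hτ1 i j]
            _ ≤ ∑ k : T, if f k = ℓ then x i j k else 0 :=
                Finset.single_le_sum (f := fun k => if f k = ℓ then x i j k else 0)
                  (fun k _ => Nat.zero_le _) (Finset.mem_univ (τ i j))
        have h1' := sumOne i j
        omega
      rw [hL] at heq
      obtain ⟨k, _, hk⟩ := Finset.exists_ne_zero_of_sum_ne_zero
        (s := Finset.univ) (f := fun k => if g k = ℓ then x i' j' k else 0)
        (by rw [← heq]; exact one_ne_zero)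
      by_cases hgk : g k = ℓ
      · rw [if_pos hgk] at hk
        have hk1 : x i' j' k = 1 := (hx i' j' k).resolve_left hk
        rw [hτ2 i' j' k hk1] at hgk
        exact hgk.symm
      · rw [if_neg hgk] at hk; exact absurd rfl hk
    refine ⟨τ, ?_, ?_, hiff⟩
    · intro i j hi
      exact hadj i ⟨i.val + 1, hi⟩ j j ts tn (h1 i j hi (ts (τ i j)))
    · intro i j hj
      exact hadj i i j ⟨j.val + 1, hj⟩ te tw (h2 i j hj (te (τ i j)))
  · -- reverse direction
    obtain ⟨τ, hv, hh, hind⟩ := hτ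
    have xval : ∀ i j k, x i j k = if τ i j = k then 1 else 0 := by
      intro i j k
      by_cases hk : τ i j = k
      · rw [if_pos hk]; exact (hind i j k).mpr hk
      · rw [if_neg hk]
        rcases hx i j k with h0 | h1
        · exact h0
        · exact absurd ((hind i j k).mp h1) hk
    have hsum1 : ∀ i j, (∑ k : T, x i j k) = 1 := by
      intro i j
      simp only [xval]
      rw [Finset.sum_ite_eq]
      simp
    have hside : ∀ (i : Fin h) (j : Fin w) (f : T → C) (ℓ : C),
        (∑ k : T, if f k = ℓ then x i j k else 0) = if f (τ i j) = ℓ then 1 else 0 := by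
      intro i j f ℓ
      simp only [xval]
      exact sum_double_ite f ℓ (τ i j)
    refine ⟨?_, ?_, fun i j _ => hsum1 i j, fun i j _ => hsum1 i j⟩
    · intro i j hi ℓ
      rw [hside, hside, hv i j hi]
    · intro i j hj ℓ
      rw [hside, hside, hh i j hj]
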